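/- Let q ≥ 3, λ = 2cos(π/q), and let g_k := (U^k S)⁻¹ for k = 1, …, q-1, where U = [[λ,-1],[1,0]] and S = [[0,1],[-1,0]]. Fix a real s and define, for γ ∈ GL₂(ℝ) with nonvanishing relevant denominators, (τ_s(γ⁻¹)f)(t) = |c_γ t + d_γ|^{-2s} f(γ.t). Then for Q = [[0,1],[1,0]] and for every function f : ℝ_{>0} → ℂ and t > 0 at which all the terms are defined: ∑_{k=1}^{q-1} (τ_s(g_k) τ_s(Q) f)(t) = ∑_{k=1}^{q-1} (τ_s(Q) τ_s(g_k) f)(t). That is, the slow transfer operator ℒ_{F,s} = ∑_{k=1}^{q-1} τ_s(g_k) commutes with τ_s(Q). -/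

import Mathlib

open Real Matrix

/-- The action `τ_s(γ⁻¹)` in the line model: for a matrix `γ`,
`(act s γ f) t = |c t + d|^(-2s) · f(γ.t)`.  Thus `τ_s(g_k) = act s (U^k * S)`
since `g_k = (U^k S)⁻¹`, and `τ_s(Q) = act s Q` since `Q⁻¹ = Q`. -/
noncomputable def act (s : ℝ) (γ : Matrix (Fin 2) (Fin 2) ℝ) (f : ℝ → ℂ) (t : ℝ) : ℂ :=
  (|γ 1 0 * t + γ 1 1| ^ (-2 * s) : ℝ) * f ((γ 0 0 * t + γ 0 1) / (γ 1 0 * t + γ 1 1))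

/-- Normalized Chebyshev-like sequence `sin(nθ)/sin θ`. -/
noncomputable def chebS (θ : ℝ) (n : ℕ) : ℝ := Real.sin (n * θ) / Real.sin θ

lemma chebS_zero (θ : ℝ) : chebS θ 0 = 0 := by simp [chebS]

lemma chebS_one {θ : ℝ} (h : Real.sin θ ≠ 0) : chebS θ 1 = 1 := by
  simp [chebS, div_self h]

lemma chebS_two (θ : ℝ) : chebS θ 2 = 2 * Real.cos θ * chebS θ 1 := by
  unfold chebS
  rw [show ((2:ℕ):ℝ) * θ = θ + θ by push_cast; ring, Real.sin_add]
  push_cast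
  ring

lemma chebS_rec (θ : ℝ) (n : ℕ) :
    chebS θ (n + 2) = 2 * Real.cos θ * chebS θ (n + 1) - chebS θ n := by
  unfold chebS
  have e1 : ((n:ℝ) + 2) * θ = ((n:ℝ) + 1) * θ + θ := by ring
  have e2 : (n:ℝ) * θ = ((n:ℝ) + 1) * θ - θ := by ring
  push_cast
  rw [e1, e2, Real.sin_add, Real.sin_sub]
  ring

lemma chebS_sym {θ : ℝ} {q : ℕ} (hqθ : (q:ℝ) * θ = Real.pi) {p r : ℕ} (hpr : p + r = q) :
    chebS θ p = chebS θ r := by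
  have hc : (p:ℝ) + r = q := by exact_mod_cast congrArg (Nat.cast : ℕ → ℝ) hpr
  have : (p:ℝ) * θ = Real.pi - (r:ℝ) * θ := by rw [← hqθ]; linear_combination θ * hc
  unfold chebS
  rw [this, Real.sin_pi_sub]

theorem stmt_18 (q : ℕ) (hq : 3 ≤ q) (lam : ℝ) (hlam : lam = 2 * Real.cos (Real.pi / q))
    (U S Q : Matrix (Fin 2) (Fin 2) ℝ)
    (hU : U = !![lam, -1; 1, 0])
    (hS : S = !![0, 1; -1, 0])
    (hQ : Q = !![0, 1; 1, 0])
    (s : ℝ) (f : ℝ → ℂ) (t : ℝ) (ht : 0 < t)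
    (hden : ∀ k ∈ Finset.Icc 1 (q - 1),
      (U ^ k * S) 1 0 * t + (U ^ k * S) 1 1 ≠ 0)
    (hval : ∀ k ∈ Finset.Icc 1 (q - 1),
      ((U ^ k * S) 0 0 * t + (U ^ k * S) 0 1) / ((U ^ k * S) 1 0 * t + (U ^ k * S) 1 1) ≠ 0)
    (hden' : ∀ k ∈ Finset.Icc 1 (q - 1),
      (U ^ k * S) 1 0 * t⁻¹ + (U ^ k * S) 1 1 ≠ 0) :
    ∑ k ∈ Finset.Icc 1 (q - 1), act s (U ^ k * S) (act s Q f) t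
      = ∑ k ∈ Finset.Icc 1 (q - 1), act s Q (act s (U ^ k * S) f) t := by
  have hqR : (0:ℝ) < q := by positivity
  set θ : ℝ := Real.pi / q with hθ
  have hθpos : 0 < θ := by positivity
  have h1q : (1:ℝ) < q := by exact_mod_cast (by omega : 1 < q)
  have hθlt : θ < Real.pi := div_lt_self Real.pi_pos h1q
  have hqθ : (q:ℝ) * θ = Real.pi := by rw [hθ]; field_simp [hqR.ne']
  have hsin : Real.sin θ ≠ 0 := ne_of_gt (Real.sin_pos_of_pos_of_lt_pi hθpos hθlt)
  have hlam' : lam = 2 * Real.cos θ := hlam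
  set a : ℕ → ℝ := chebS θ with ha
  have ha0 : a 0 = 0 := chebS_zero θ
  have ha1 : a 1 = 1 := chebS_one hsin
  have ha2 : a 2 = lam := by rw [ha, chebS_two, ← ha, ha1, hlam']; ring
  have hrec : ∀ n : ℕ, a (n + 2) = lam * a (n + 1) - a n := by
    intro n; rw [ha, chebS_rec, hlam']
  have key : ∀ n : ℕ, U ^ (n + 1) = !![a (n + 2), -a (n + 1); a (n + 1), -a n] := by
    intro n
    induction n with
    | zero => rw [pow_one, hU, ha0, ha1, ha2]; norm_num
    | succ m ih =>
      rw [pow_succ, ih, hU, Matrix.mul_fin_two, hrec (m + 1)]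
      ext i j
      fin_cases i <;> fin_cases j <;>
        simp [show 2 + m = m + 2 from by omega, show 1 + m = m + 1 from by omega,
          show 3 + m = m + 3 from by omega, hrec] <;> ring
  have hsym : ∀ p r : ℕ, p + r = q → a p = a r := fun p r h => chebS_sym hqθ h
  rw [show (∑ k ∈ Finset.Icc 1 (q - 1), act s Q (act s (U ^ k * S) f) t)
      = ∑ k ∈ Finset.Icc 1 (q - 1), act s Q (act s (U ^ (q - k) * S) f) t from
    Finset.sum_nbij' (fun k => q - k) (fun k => q - k)
      (by intro x hx; simp only [Finset.mem_Icc] at *; omega)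
      (by intro x hx; simp only [Finset.mem_Icc] at *; omega)
      (by intro x hx; simp only [Finset.mem_Icc] at *; omega)
      (by intro x hx; simp only [Finset.mem_Icc] at *; omega)
      (fun x _ => rfl) |>.symm]
  apply Finset.sum_congr rfl
  intro k hkk
  have hk' : q - k ∈ Finset.Icc 1 (q - 1) := by
    simp only [Finset.mem_Icc] at *; omega
  have hk := Finset.mem_Icc.mp hkk
  obtain ⟨m, rfl⟩ : ∃ m, k = m + 1 := ⟨k - 1, by omega⟩
  obtain ⟨j, hj⟩ : ∃ j, q - (m + 1) = j + 1 := ⟨q - (m + 1) - 1, by omega⟩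
  have h1 := hden _ hkk
  have h2 := hval _ hkk
  have h3 := hden' _ hk'
  have hM : U ^ (m + 1) * S = !![a (m+1), a (m+2); a m, a (m+1)] := by
    rw [key, hS, Matrix.mul_fin_two]; norm_num
  have hjm1 : a (j + 1) = a (m + 1) := hsym _ _ (by omega)
  have hjm2 : a (j + 2) = a m := hsym _ _ (by omega)
  have hjm3 : a j = a (m + 2) := hsym _ _ (by omega)
  have hN : U ^ (q - (m + 1)) * S = !![a (m+1), a m; a (m+2), a (m+1)] := by
    rw [hj, key, hS, Matrix.mul_fin_two, hjm1, hjm2, hjm3]; norm_num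
  rw [hM] at h1 h2 ⊢
  rw [hN] at h3 ⊢
  set A := a m
  set B := a (m + 1)
  set C := a (m + 2)
  simp at h1 h2 h3
  have htne : t ≠ 0 := ne_of_gt ht
  have hnum : B * t + C ≠ 0 := h2.1
  have h1' : A * t + B ≠ 0 := h2.2
  have h3' : C * t⁻¹ + B ≠ 0 := h3
  unfold act
  rw [hQ]
  norm_num [Matrix.cons_val_zero, Matrix.cons_val_one, Matrix.head_cons]
  have harg : (A * t + B) / (B * t + C) = (B * t⁻¹ + A) / (C * t⁻¹ + B) := by
    rw [div_eq_div_iff hnum h3']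
    field_simp
    ring
  have hcoef : |A * t + B| ^ (-(2 * s)) * |(B * t + C) / (A * t + B)| ^ (-(2 * s))
      = |t| ^ (-(2 * s)) * |C * t⁻¹ + B| ^ (-(2 * s)) := by
    rw [← Real.mul_rpow (abs_nonneg _) (abs_nonneg _),
        ← Real.mul_rpow (abs_nonneg _) (abs_nonneg _), ← abs_mul, ← abs_mul]
    congr 2
    field_simp
    ring
  rw [harg, ← mul_assoc, ← mul_assoc, ← Complex.ofReal_mul, ← Complex.ofReal_mul, hcoef]
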